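/- The stabilizer Σ = Stab(0) of the point 0 in the group H = S_∞ of finitely supported permutations of ℕ is core-free in H but not highly core-free in H. -/

import Mathlib

/-- The set ΣF = {σf : σ ∈ Σ, f ∈ F}. -/
def cosetProd {H : Type*} [Group H] (A : Subgroup H) (F : Set H) : Set H :=
  {h | ∃ σ ∈ A, ∃ f ∈ F, h = σ * f}

/-- A subgroup `A ≤ H` is highly core-free if for every finite `F ⊆ H`, every `n ≥ 1`
and all nonempty `S₁, …, Sₙ ⊆ H` covering `H \ ΣF`, some `Sₖ` has trivial core
`⋂_{h ∈ Sₖ} h⁻¹ A h = {1}`. -/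
def HighlyCoreFree {H : Type*} [Group H] (A : Subgroup H) : Prop :=
  ∀ F : Set H, F.Finite → ∀ n : ℕ, 1 ≤ n → ∀ S : Fin n → Set H,
    (∀ k, (S k).Nonempty) → (∀ h : H, h ∉ cosetProd A F → ∃ k, h ∈ S k) →
    ∃ k, ∀ x : H, (∀ h ∈ S k, h * x * h⁻¹ ∈ A) → x = 1
/-- The group `S_∞` of finitely supported permutations of ℕ, as a subgroup of
`Equiv.Perm ℕ`. -/
def finSupportedPerms : Subgroup (Equiv.Perm ℕ) where
  carrier := {σ | Set.Finite {x : ℕ | σ x ≠ x}}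
  one_mem' := by simp
  mul_mem' := by
    intro σ τ hσ hτ
    refine Set.Finite.subset (hσ.union hτ) ?_
    intro x hx
    by_contra hc
    simp only [Set.mem_union, Set.mem_setOf_eq, not_or, ne_eq, not_not] at hc
    exact hx (by simp [Equiv.Perm.mul_apply, hc.2, hc.1])
  inv_mem' := by
    intro σ hσ
    refine Set.Finite.subset (Set.Finite.image σ hσ) ?_
    intro x hx
    refine ⟨σ⁻¹ x, ?_, by simp⟩
    simp only [Set.mem_setOf_eq] at hx ⊢
    intro h
    exact hx (by (conv_lhs => rw [← h]); exact σ.apply_symm_apply x)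

theorem Equiv.Perm.apply_inv_self {α : Type*} (f : Equiv.Perm α) (x : α) : f (f⁻¹ x) = x :=
  f.apply_symm_apply x

/-- The stabilizer of `0` in `S_∞` is core-free but not highly core-free. -/
lemma swap_mem_fsp (a b : ℕ) : Equiv.swap a b ∈ finSupportedPerms := by
  refine Set.Finite.subset ((Set.finite_singleton b).insert a) ?_
  intro x hx
  simp only [Set.mem_setOf_eq] at hx
  by_contra hc
  simp only [Set.mem_insert_iff, Set.mem_singleton_iff, not_or] at hc
  exact hx (Equiv.swap_apply_of_ne_of_ne hc.1 hc.2)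

lemma swap_ne_one {a b : ℕ} (hab : a ≠ b) :
    (⟨Equiv.swap a b, swap_mem_fsp a b⟩ : ↥finSupportedPerms) ≠ 1 := by
  intro he
  have h1 : Equiv.swap a b = 1 := congrArg Subtype.val he
  have h2 := congrFun (congrArg DFunLike.coe h1) a
  simp only [Equiv.swap_apply_left, Equiv.Perm.one_apply] at h2
  exact hab h2.symm

theorem stabilizer_corefree_not_hcf :
    (MulAction.stabilizer (↥finSupportedPerms) (0 : ℕ)).normalCore = ⊥ ∧
    ¬ HighlyCoreFree (MulAction.stabilizer (↥finSupportedPerms) (0 : ℕ)) := by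
  constructor
  · rw [eq_bot_iff]
    intro σ hσ
    rw [Subgroup.mem_bot]
    ext1
    ext n
    have h := hσ ⟨Equiv.swap 0 n, swap_mem_fsp 0 n⟩
    rw [MulAction.mem_stabilizer_iff] at h
    have h' : (Equiv.swap 0 n) ((σ : Equiv.Perm ℕ) ((Equiv.swap 0 n) 0)) = 0 := h
    rw [Equiv.swap_apply_left] at h'
    have := (Equiv.swap 0 n).injective (h'.trans (Equiv.swap_apply_right 0 n).symm)
    simpa using this
  · intro hhcf
    set A := MulAction.stabilizer (↥finSupportedPerms) (0 : ℕ)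
    set S : Fin 2 → Set (↥finSupportedPerms) :=
      fun k => if k = 0 then {h | ((h : Equiv.Perm ℕ))⁻¹ 0 = 1}
               else {h | 2 ≤ ((h : Equiv.Perm ℕ))⁻¹ 0} with hS
    obtain ⟨k, hk⟩ := hhcf {1} (Set.finite_singleton 1) 2 (by norm_num) S
      (by
        intro k
        fin_cases k
        · refine ⟨⟨Equiv.swap 0 1, swap_mem_fsp 0 1⟩, ?_⟩
          show ((Equiv.swap 0 1))⁻¹ 0 = 1
          simp [Equiv.swap_apply_left]
        · refine ⟨⟨Equiv.swap 0 2, swap_mem_fsp 0 2⟩, ?_⟩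
          show 2 ≤ ((Equiv.swap 0 2))⁻¹ 0
          simp [Equiv.swap_apply_left])
      (by
        intro h hn
        have hne : ((h : Equiv.Perm ℕ))⁻¹ 0 ≠ 0 := by
          intro h0
          apply hn
          refine ⟨h, ?_, 1, rfl, (mul_one h).symm⟩
          show ((h : Equiv.Perm ℕ)) 0 = 0
          conv_lhs => rw [← h0, Equiv.Perm.apply_inv_self]
        rcases Nat.lt_or_ge (((h : Equiv.Perm ℕ))⁻¹ 0) 2 with hlt | hge
        · refine ⟨0, ?_⟩
          show ((h : Equiv.Perm ℕ))⁻¹ 0 = 1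
          omega
        · refine ⟨1, ?_⟩
          show 2 ≤ ((h : Equiv.Perm ℕ))⁻¹ 0
          exact hge)
    fin_cases k
    · refine swap_ne_one (by norm_num : (2:ℕ) ≠ 3) (hk ⟨Equiv.swap 2 3, swap_mem_fsp 2 3⟩ ?_)
      intro h hh
      have hh1 : ((h : Equiv.Perm ℕ))⁻¹ 0 = 1 := hh
      show ((h : Equiv.Perm ℕ)) ((Equiv.swap 2 3) (((h : Equiv.Perm ℕ))⁻¹ 0)) = 0
      rw [hh1, Equiv.swap_apply_of_ne_of_ne (by norm_num) (by norm_num), ← hh1,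
        Equiv.Perm.apply_inv_self]
    · refine swap_ne_one (by norm_num : (0:ℕ) ≠ 1) (hk ⟨Equiv.swap 0 1, swap_mem_fsp 0 1⟩ ?_)
      intro h hh
      have hh1 : 2 ≤ ((h : Equiv.Perm ℕ))⁻¹ 0 := hh
      show ((h : Equiv.Perm ℕ)) ((Equiv.swap 0 1) (((h : Equiv.Perm ℕ))⁻¹ 0)) = 0
      rw [Equiv.swap_apply_of_ne_of_ne (by omega) (by omega), Equiv.Perm.apply_inv_self]
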